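/- arXiv:1708.08684 — 5 statements merged into one kernel-verified Lean document; each statement's English description precedes it below -/
import Mathlib

section
/- There exists a nonzero additive function $f: \mathbb{R} \to \mathbb{R}$ such that $f(x) \cdot f(1/x) = 0$ for every nonzero real number $x$. -/
open Polynomial

theorem stmt_4 :
    ∃ f : ℝ → ℝ, (∀ x y : ℝ, f (x + y) = f x + f y) ∧ f ≠ 0 ∧
      ∀ x : ℝ, x ≠ 0 → f x * f x⁻¹ = 0 := by
  classical
  -- a transcendental real
  obtain ⟨t, ht⟩ : ∃ t : ℝ, Transcendental ℚ t := by
    refine ⟨liouvilleNumber 3, fun h => ?_⟩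
    exact transcendental_liouvilleNumber (by norm_num)
      ((IsFractionRing.isAlgebraic_iff ℤ ℚ ℝ).mpr h)
  have hinj : Function.Injective (Polynomial.aeval t : ℚ[X] →ₐ[ℚ] ℝ) :=
    transcendental_iff_injective.mp ht
  set A : Subalgebra ℚ ℝ := (Polynomial.aeval t : ℚ[X] →ₐ[ℚ] ℝ).range with hA
  let e : ℚ[X] ≃ₐ[ℚ] A := AlgEquiv.ofInjective _ hinj
  let φ : A.toSubring →+* ℚ :=
    ((Polynomial.aeval (0:ℚ) : ℚ[X] →ₐ[ℚ] ℚ) : ℚ[X] →+* ℚ).comp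
      ((e.symm : A →ₐ[ℚ] ℚ[X]) : A →+* ℚ[X])
  let P : Ideal A.toSubring := RingHom.ker φ
  have hPprime : P.IsPrime := RingHom.ker_isPrime φ
  -- t as an element of A
  have htA : t ∈ A.toSubring := ⟨X, by simp⟩
  have heX : e X = ⟨t, htA⟩ := by
    apply Subtype.ext
    show ((AlgEquiv.ofInjective _ hinj) X : ℝ) = t
    rw [AlgEquiv.ofInjective_apply]
    simp
  have htP : (⟨t, htA⟩ : A.toSubring) ∈ P := by
    have h1 : e.symm ⟨t, htA⟩ = X := by rw [← heX]; exact e.symm_apply_apply X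
    have h2 : φ ⟨t, htA⟩ = 0 := by
      show Polynomial.aeval (0:ℚ) (e.symm ⟨t, htA⟩) = 0
      rw [h1]; simp
    exact h2
  -- rationals in A
  have hqA : ∀ q : ℚ, (q : ℝ) ∈ A.toSubring := fun q => ⟨C q, by simp⟩
  -- dominating valuation subring
  obtain ⟨B, hB⟩ := (LocalSubring.ofPrime A.toSubring P).exists_le_valuationSubring
  have hSle : A.toSubring ≤ (LocalSubring.ofPrime A.toSubring P).toSubring :=
    LocalSubring.le_ofPrime _ _
  have hSB : A.toSubring ≤ B.toSubring := hSle.trans hB.1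
  -- t⁻¹ ∉ B
  have htne : t ≠ 0 := by
    intro h; exact ht (h ▸ isAlgebraic_zero)
  have htinv : t⁻¹ ∉ B := by
    intro hmem
    have htB : t ∈ B.toSubring := hSB htA
    have hunit : IsUnit (⟨t, htB⟩ : B.toSubring) := by
      refine isUnit_iff_exists_inv.mpr ⟨⟨t⁻¹, hmem⟩, ?_⟩
      exact Subtype.ext (mul_inv_cancel₀ htne)
    have := hB.2
    have hunit' : IsUnit (Subring.inclusion hB.1 (⟨t, hSle htA⟩ :
        (LocalSubring.ofPrime A.toSubring P).toSubring)) := hunit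
    have : IsUnit (⟨t, hSle htA⟩ : (LocalSubring.ofPrime A.toSubring P).toSubring) :=
      hB.2.map_nonunit _ hunit'
    have heq : (⟨t, hSle htA⟩ : (LocalSubring.ofPrime A.toSubring P).toSubring) =
        algebraMap A.toSubring (LocalSubring.ofPrime A.toSubring P).toSubring ⟨t, htA⟩ := rfl
    rw [heq] at this
    exact ((IsLocalization.AtPrime.isUnit_to_map_iff
      (LocalSubring.ofPrime A.toSubring P).toSubring P ⟨t, htA⟩).mp this) htP
  -- B as a ℚ-submodule
  let H : Submodule ℚ ℝ :=
    { carrier := B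
      add_mem' := fun ha hb => B.toSubring.add_mem ha hb
      zero_mem' := B.toSubring.zero_mem
      smul_mem' := fun q x hx => by
        have : (q : ℝ) * x ∈ B.toSubring := B.toSubring.mul_mem (hSB (hqA q)) hx
        simpa [Rat.smul_def] using this }
  have hHinv : t⁻¹ ∉ H := htinv
  -- quotient and functional
  let π := H.mkQ
  have hv : π t⁻¹ ≠ 0 := by
    simp only [π, Submodule.mkQ_apply, ne_eq, Submodule.Quotient.mk_eq_zero]
    exact hHinv
  let b := Module.Basis.ofVectorSpace ℚ (ℝ ⧸ H)
  obtain ⟨i, hi⟩ : ∃ i, b.repr (π t⁻¹) i ≠ 0 := by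
    by_contra hcon
    push_neg at hcon
    apply hv
    have : b.repr (π t⁻¹) = 0 := Finsupp.ext fun i => hcon i
    simpa [this] using (b.repr.injective (by simp [this]) : π t⁻¹ = 0)
  refine ⟨fun x => ((b.repr (π x)) i : ℝ), ?_, ?_, ?_⟩
  · intro x y
    simp only [map_add, Finsupp.coe_add, Pi.add_apply, Rat.cast_add]
  · intro h
    apply hi
    have := congrFun h t⁻¹
    simpa using this
  · intro x hx
    have hmem : ∀ y : ℝ, y ∈ H → ((b.repr (π y)) i : ℝ) = 0 := by
      intro y hyH
      have : π y = 0 := by simp [π, Submodule.Quotient.mk_eq_zero, hyH]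
      simp [this]
    show ((b.repr (π x)) i : ℝ) * ((b.repr (π x⁻¹)) i : ℝ) = 0
    rcases B.mem_or_inv_mem x with hc | hc
    · rw [hmem x hc]; ring
    · rw [hmem x⁻¹ hc]; ring
end

section
/- There exists a nonzero additive function $f: \mathbb{R} \to \mathbb{R}$ with $f(x) f(1/x) = 0$ for all nonzero $x$, if and only if there exists a $\mathbb{Q}$-subspace $U$ of $\mathbb{R}$ such that $U \neq \mathbb{R}$ and for every nonzero real $x$, either $x \in U$ or $1/x \in U$. -/
theorem stmt_5 :
    (∃ f : ℝ → ℝ, (∀ x y : ℝ, f (x + y) = f x + f y) ∧ f ≠ 0 ∧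
        ∀ x : ℝ, x ≠ 0 → f x * f x⁻¹ = 0) ↔
      ∃ U : Submodule ℚ ℝ, U ≠ ⊤ ∧ ∀ x : ℝ, x ≠ 0 → x ∈ U ∨ x⁻¹ ∈ U := by
  constructor
  · rintro ⟨f, hadd, hne, hprod⟩
    have h0 : f 0 = 0 := by have := hadd 0 0; simpa using this
    let g : ℝ →+ ℝ := AddMonoidHom.mk' f (fun x y => hadd x y)
    let gl : ℝ →ₗ[ℚ] ℝ := g.toRatLinearMap
    refine ⟨LinearMap.ker gl, ?_, ?_⟩
    · intro h
      apply hne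
      funext x
      have hx : x ∈ LinearMap.ker gl := h ▸ Submodule.mem_top
      simpa [gl, g] using hx
    · intro x hx
      rcases mul_eq_zero.mp (hprod x hx) with h | h
      · exact Or.inl (by simpa [gl, g] using h)
      · exact Or.inr (by simpa [gl, g] using h)
  · rintro ⟨U, hU, hmem⟩
    obtain ⟨v, hv⟩ : ∃ v : ℝ, v ∉ U := by
      by_contra h
      push_neg at h
      exact hU (Submodule.eq_top_iff'.mpr h)
    obtain ⟨φ, hφv, hφU⟩ := U.exists_dual_map_eq_bot_of_notMem hv inferInstance
    have hφzero : ∀ x ∈ U, φ x = 0 := by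
      intro x hx
      have : φ x ∈ Submodule.map φ U := ⟨x, hx, rfl⟩
      rw [hφU] at this
      simpa using this
    refine ⟨fun x => (φ x : ℝ), ?_, ?_, ?_⟩
    · intro x y; push_cast [map_add]; ring
    · intro h
      apply hφv
      have := congrFun h v
      simpa using this
    · intro x hx
      rcases hmem x hx with h | h
      · simp [hφzero x h]
      · simp [hφzero x⁻¹ h]
end

section
/- There exists a $\mathbb{Q}$-subalgebra $O$ of $\mathbb{R}$ such that $O \neq \mathbb{R}$ and for every nonzero real number $x$, either $x \in O$ or $1/x \in O$. (That is, $\mathbb{R}$ admits a nontrivial valuation ring containing $\mathbb{Q}$.) -/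
theorem stmt_6 :
    ∃ O : Subalgebra ℚ ℝ, O ≠ ⊤ ∧ ∀ x : ℝ, x ≠ 0 → x ∈ O ∨ x⁻¹ ∈ O := by
  -- A transcendental real number
  obtain ⟨a, ha⟩ : ∃ a : ℝ, Transcendental ℚ a := by
    refine ⟨liouvilleNumber 3, ?_⟩
    rw [Transcendental, ← IsFractionRing.isAlgebraic_iff ℤ ℚ ℝ]
    exact transcendental_liouvilleNumber (by norm_num)
  have ha0 : a ≠ 0 := fun h => ha (h ▸ isAlgebraic_zero)
  set S0 : Subalgebra ℚ ℝ := Algebra.adjoin ℚ {a} with hS0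
  set S : Subring ℝ := S0.toSubring with hS
  have haS : a ∈ S := Algebra.self_mem_adjoin_singleton ℚ a
  -- `a` is not a unit in `S`
  have hnu : ¬ IsUnit (⟨a, haS⟩ : S) := by
    rintro ⟨⟨u, v, huv, hvu⟩, hu⟩
    have hvS : (v : ℝ) ∈ Algebra.adjoin ℚ {a} := v.2
    rw [Algebra.adjoin_singleton_eq_range_aeval] at hvS
    obtain ⟨p, hp⟩ := hvS
    have : (Polynomial.aeval a) (p * Polynomial.X - 1) = 0 := by
      have hu' : (u : ℝ) = a := congrArg Subtype.val hu
      have hva : (v : ℝ) * a = 1 := by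
        have := congrArg Subtype.val huv
        push_cast at this
        rw [hu'] at this
        linarith [this]
      have hp' : (Polynomial.aeval a) p = (v : ℝ) := hp
      simp [hp', hva]
    have := ha ⟨_, ?_, this⟩
    · exact this
    · intro h
      have := congrArg (fun q => Polynomial.coeff q 0) h
      simp at this
  -- maximal ideal containing `a`
  have hspan : Ideal.span {(⟨a, haS⟩ : S)} ≠ ⊤ := by
    rwa [Ne, Ideal.span_singleton_eq_top]
  obtain ⟨M, hM, haM⟩ := Ideal.exists_le_maximal _ hspan
  have haM' : (⟨a, haS⟩ : S) ∈ M := haM (Ideal.mem_span_singleton_self _)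
  haveI := hM.isPrime
  set A : LocalSubring ℝ := LocalSubring.ofPrime S M with hA
  obtain ⟨B, hB⟩ := A.exists_le_valuationSubring
  have haA : a ∈ A.toSubring := LocalSubring.le_ofPrime S M haS
  -- `a` is not a unit in `A.toSubring`
  have hnuA : ¬ IsUnit (⟨a, haA⟩ : A.toSubring) := by
    intro h
    have := (IsLocalization.AtPrime.isUnit_to_map_iff
      (R := S) (LocalSubring.ofPrime S M).toSubring M ⟨a, haS⟩).mp h
    exact this haM'
  refine ⟨{ toSubsemiring := B.toSubring.toSubsemiring, algebraMap_mem' := fun q => ?_ }, ?_, ?_⟩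
  · exact hB.1 (LocalSubring.le_ofPrime S M (S0.algebraMap_mem q))
  · intro htop
    have hainvB : a⁻¹ ∈ B.toSubring := by
      have : a⁻¹ ∈ (⊤ : Subalgebra ℚ ℝ) := trivial
      rw [← htop] at this
      exact this
    have haB : a ∈ B.toSubring := hB.1 haA
    have : IsUnit (Subring.inclusion hB.1 ⟨a, haA⟩) := by
      refine isUnit_iff_exists_inv.mpr ⟨⟨a⁻¹, hainvB⟩, ?_⟩
      ext
      exact mul_inv_cancel₀ ha0
    exact hnuA (hB.2.1 _ this)
  · intro x _
    exact B.mem_or_inv_mem x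
end

section
/- Let $K$ be a field, $R \subseteq K$ a subring, and $P$ a prime ideal of $R$. Then there exists a valuation ring $O$ of $K$ with maximal ideal $M$ such that $R \subseteq O$ and $M \cap R = P$. -/
open IsLocalRing

theorem stmt_7 {K : Type*} [Field K] (R : Subring K) (P : Ideal R) (hP : P.IsPrime) :
    ∃ O : Subring K, ∃ hRO : R ≤ O,
      (∀ x : K, x ≠ 0 → x ∈ O ∨ x⁻¹ ∈ O) ∧
      ∃ M : Ideal O, M.IsMaximal ∧ (∀ M' : Ideal O, M'.IsMaximal → M' = M) ∧
        Ideal.comap (Subring.inclusion hRO) M = P := by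
  have := hP
  let A : LocalSubring K := LocalSubring.ofPrime R P
  obtain ⟨B, hAB⟩ := A.exists_le_valuationSubring
  have hRA : R ≤ A.toSubring := LocalSubring.le_ofPrime R P
  have hRO : R ≤ B.toSubring := hRA.trans hAB.1
  haveI : IsLocalRing B.toSubring := B.isLocalRing
  refine ⟨B.toSubring, hRO, fun x hx ↦ (B.2 x).imp id id, maximalIdeal B.toSubring,
    inferInstance, fun M' hM' ↦ hM'.eq_of_le (maximalIdeal.isMaximal _).ne_top
      (le_maximalIdeal hM'.ne_top), ?_⟩
  ext x
  simp only [Ideal.mem_comap, mem_maximalIdeal, mem_nonunits_iff]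
  have key : IsUnit (Subring.inclusion hRO x) ↔ x ∉ P := by
    constructor
    · intro h hxP
      have := hAB.2.1 (a := Subring.inclusion hRA x)
        (by exact h)
      have h2 : IsUnit (algebraMap R A.toSubring x) := this
      exact (IsLocalization.AtPrime.isUnit_to_map_iff A.toSubring P x).mp h2 hxP
    · intro h
      have h2 : IsUnit (algebraMap R A.toSubring x) :=
        (IsLocalization.AtPrime.isUnit_to_map_iff A.toSubring P x).mpr h
      have := h2.map (Subring.inclusion hAB.1)
      exact this
  rw [key]
  tauto
end

section
/- Let $K$ be a field with a valuation ring $O_K$, and let $L$ be a field extension of $K$. Then there exists a valuation ring $O_L$ of $L$ such that $O_L \cap K = O_K$. -/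
theorem stmt_8 {K L : Type*} [Field K] [Field L] [Algebra K L]
    (OK : Subring K) (hOK : ∀ x : K, x ≠ 0 → x ∈ OK ∨ x⁻¹ ∈ OK) :
    ∃ OL : Subring L, (∀ y : L, y ≠ 0 → y ∈ OL ∨ y⁻¹ ∈ OL) ∧
      ∀ x : K, algebraMap K L x ∈ OL ↔ x ∈ OK := by
  let V : ValuationSubring K :=
    ⟨OK, fun x => by
      rcases eq_or_ne x 0 with rfl | hx
      · exact Or.inl OK.zero_mem
      · exact hOK x hx⟩
  let f : V →+* L := (algebraMap K L).comp (Subring.subtype V.toSubring)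
  obtain ⟨A, hA, hloc⟩ := IsLocalRing.exists_factor_valuationRing f
  refine ⟨A.toSubring, fun y hy => A.mem_or_inv_mem y, fun x => ⟨fun hx => ?_, fun hx => hA ⟨x, hx⟩⟩⟩
  by_contra hxO
  have hx0 : x ≠ 0 := fun h => hxO (h ▸ OK.zero_mem)
  have hinv : x⁻¹ ∈ OK := (hOK x hx0).resolve_left hxO
  have hunit : IsUnit ((f.codRestrict A.toSubring hA) ⟨x⁻¹, hinv⟩) := by
    refine isUnit_iff_exists_inv.mpr ⟨⟨algebraMap K L x, hx⟩, Subtype.ext ?_⟩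
    show algebraMap K L x⁻¹ * algebraMap K L x = 1
    rw [← map_mul, inv_mul_cancel₀ hx0, map_one]
  obtain ⟨u, hu⟩ := hloc.1 _ hunit
  apply hxO
  have h1 : (x⁻¹ : K) * ((u⁻¹ : Vˣ) : V) = 1 := by
    have := congrArg (fun z : V => (z : K)) (u.mul_inv)
    simpa [hu] using this
  have hx' : (((u⁻¹ : Vˣ) : V) : K) = x := by
    have := eq_inv_of_mul_eq_one_left h1
    exact (inv_injective this).symm
  exact hx' ▸ ((u⁻¹ : Vˣ) : V).2
end
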